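/- Let σ, Z₁, Z₂ be real random variables on a probability space such that σ, Z₁, Z₂ are mutually independent, Z₁ and Z₂ are each standard Gaussian (law N(0,1)), E[σ²] = 1, and E[σ⁴] < ∞. Define ε₁ = σ·Z₁ and ε₂ = σ·Z₂, and set k₁ = E[ε₁⁴] − 3, k₂ = E[ε₂⁴] − 3, and c = E[ε₁²ε₂²] − 1. Then k₁ = k₂ = 3c, with c = E[σ⁴] − 1, and consequently (k₁ + k₂ + 6c)² = 8(k₁² + k₂²). -/

import Mathlib

open MeasureTheory ProbabilityTheory
open Real Set
open scoped ENNReal NNReal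

lemma aux_Ioi_moment (q : ℝ) (hq : (-1:ℝ) < q) :
    ∫ x in Ioi (0:ℝ), x ^ q * Real.exp (-(1/2) * x ^ (2:ℝ)) =
      (1/2 : ℝ) ^ (-(q + 1)/2) * (1/2) * Real.Gamma ((q + 1)/2) :=
  integral_rpow_mul_exp_neg_mul_rpow two_pos hq one_half_pos

lemma aux_half_rpow (y : ℝ) : (1/2 : ℝ) ^ (-y : ℝ) = (2:ℝ) ^ (y : ℝ) := by
  rw [one_div, Real.inv_rpow (by norm_num), ← Real.rpow_neg (by norm_num), neg_neg]

lemma aux_rpow_nat (x : ℝ) (n : ℕ) : x ^ (n : ℝ) = x ^ n := Real.rpow_natCast x n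

lemma aux_abs4 (y : ℝ) : |y| ^ 4 = y ^ 4 := by
  rw [show (4:ℕ) = 2 * 2 from rfl, pow_mul, sq_abs, ← pow_mul]

lemma aux_two_sqrt : (2:ℝ) ^ ((1:ℝ)/2) = Real.sqrt 2 := by
  rw [Real.sqrt_eq_rpow]

lemma aux_int2 : ∫ x : ℝ, x ^ 2 * Real.exp (-x ^ 2 / 2) = Real.sqrt (2 * π) := by
  have h1 : ∫ x : ℝ, x ^ 2 * Real.exp (-x ^ 2 / 2)
      = 2 * ∫ x in Ioi (0:ℝ), x ^ 2 * Real.exp (-x ^ 2 / 2) := by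
    rw [← integral_comp_abs (f := fun x => x ^ 2 * Real.exp (-x ^ 2 / 2))]
    simp [sq_abs]
  have h2 : ∫ x in Ioi (0:ℝ), x ^ 2 * Real.exp (-x ^ 2 / 2)
      = ∫ x in Ioi (0:ℝ), x ^ (2:ℝ) * Real.exp (-(1/2) * x ^ (2:ℝ)) := by
    refine setIntegral_congr_fun measurableSet_Ioi (fun x hx => ?_)
    have e2 : x ^ (2:ℝ) = x ^ (2:ℕ) := by rw [← aux_rpow_nat x 2]; norm_cast
    rw [e2]
    ring_nf
  rw [h1, h2, aux_Ioi_moment 2 (by norm_num)]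
  have hG : Real.Gamma ((2 + 1)/2) = (1/2) * Real.sqrt π := by
    have : ((2:ℝ) + 1)/2 = 1/2 + 1 := by norm_num
    rw [this, Real.Gamma_add_one (by norm_num), Real.Gamma_one_half_eq]
  have hp : (1/2 : ℝ) ^ (-(2 + 1)/2 : ℝ) = 2 * Real.sqrt 2 := by
    have : (-(2 + 1)/2 : ℝ) = -(3/2) := by norm_num
    rw [this, aux_half_rpow]
    have : (3/2 : ℝ) = 1 + 1/2 := by norm_num
    rw [this, Real.rpow_add (by norm_num), Real.rpow_one, aux_two_sqrt]
  rw [hG, hp, Real.sqrt_mul (by norm_num)]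
  ring

lemma aux_int4 : ∫ x : ℝ, x ^ 4 * Real.exp (-x ^ 2 / 2) = 3 * Real.sqrt (2 * π) := by
  have h1 : ∫ x : ℝ, x ^ 4 * Real.exp (-x ^ 2 / 2)
      = 2 * ∫ x in Ioi (0:ℝ), x ^ 4 * Real.exp (-x ^ 2 / 2) := by
    rw [← integral_comp_abs (f := fun x => x ^ 4 * Real.exp (-x ^ 2 / 2))]
    simp [aux_abs4, sq_abs]
  have h2 : ∫ x in Ioi (0:ℝ), x ^ 4 * Real.exp (-x ^ 2 / 2)
      = ∫ x in Ioi (0:ℝ), x ^ (4:ℝ) * Real.exp (-(1/2) * x ^ (2:ℝ)) := by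
    refine setIntegral_congr_fun measurableSet_Ioi (fun x hx => ?_)
    have e2 : x ^ (2:ℝ) = x ^ (2:ℕ) := by rw [← aux_rpow_nat x 2]; norm_cast
    have e4 : x ^ (4:ℝ) = x ^ (4:ℕ) := by rw [← aux_rpow_nat x 4]; norm_cast
    rw [e2, e4]
    ring_nf
  rw [h1, h2, aux_Ioi_moment 4 (by norm_num)]
  have hG : Real.Gamma ((4 + 1)/2) = (3/4) * Real.sqrt π := by
    have e1 : ((4:ℝ) + 1)/2 = 3/2 + 1 := by norm_num
    have e2 : (3/2 : ℝ) = 1/2 + 1 := by norm_num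
    rw [e1, Real.Gamma_add_one (by norm_num), e2, Real.Gamma_add_one (by norm_num),
      Real.Gamma_one_half_eq]
    ring
  have hp : (1/2 : ℝ) ^ (-(4 + 1)/2 : ℝ) = 4 * Real.sqrt 2 := by
    have : (-(4 + 1)/2 : ℝ) = -(5/2) := by norm_num
    rw [this, aux_half_rpow]
    have : (5/2 : ℝ) = 2 + 1/2 := by norm_num
    rw [this, Real.rpow_add (by norm_num), aux_two_sqrt]
    norm_num
  rw [hG, hp, Real.sqrt_mul (by norm_num)]
  ring

lemma aux_integral_gaussianReal (g : ℝ → ℝ) :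
    ∫ x, g x ∂(gaussianReal 0 1) = ∫ x, gaussianPDFReal 0 1 x * g x := by
  rw [gaussianReal_of_var_ne_zero 0 one_ne_zero]
  have : gaussianPDF 0 1 = fun x => ((gaussianPDFReal 0 1 x).toNNReal : ℝ≥0∞) := rfl
  rw [this, integral_withDensity_eq_integral_smul
    ((measurable_gaussianPDFReal 0 1).real_toNNReal) g]
  refine integral_congr_ae (Filter.Eventually.of_forall fun x => ?_)
  simp [NNReal.smul_def, Real.coe_toNNReal _ (gaussianPDFReal_nonneg 0 1 x)]

lemma aux_pdf_std (x : ℝ) :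
    gaussianPDFReal 0 1 x = (Real.sqrt (2 * π))⁻¹ * Real.exp (-x ^ 2 / 2) := by
  rw [gaussianPDFReal]
  norm_num

lemma aux_gauss2 : ∫ x : ℝ, x ^ 2 ∂(gaussianReal 0 1) = 1 := by
  rw [aux_integral_gaussianReal]
  have : ∀ x : ℝ, gaussianPDFReal 0 1 x * x ^ 2
      = (Real.sqrt (2 * π))⁻¹ * (x ^ 2 * Real.exp (-x ^ 2 / 2)) := by
    intro x; rw [aux_pdf_std]; ring
  rw [integral_congr_ae (Filter.Eventually.of_forall this), integral_const_mul, aux_int2]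
  have hpos : (0:ℝ) < Real.sqrt (2 * π) := Real.sqrt_pos.mpr (by positivity)
  field_simp

lemma aux_gauss4 : ∫ x : ℝ, x ^ 4 ∂(gaussianReal 0 1) = 3 := by
  rw [aux_integral_gaussianReal]
  have : ∀ x : ℝ, gaussianPDFReal 0 1 x * x ^ 4
      = (Real.sqrt (2 * π))⁻¹ * (x ^ 4 * Real.exp (-x ^ 2 / 2)) := by
    intro x; rw [aux_pdf_std]; ring
  rw [integral_congr_ae (Filter.Eventually.of_forall this), integral_const_mul, aux_int4]
  have hpos : (0:ℝ) < Real.sqrt (2 * π) := Real.sqrt_pos.mpr (by positivity)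
  field_simp

/-- Gaussian scale mixtures lie on the boundary of the JADE reversal criterion: if
`ε_i = σ·Z_i` with `σ, Z₁, Z₂` mutually independent, `Z₁, Z₂` standard Gaussian,
`E[σ²] = 1` and `E[σ⁴] < ∞`, then `k₁ = k₂ = 3c` with `c = E[σ⁴] − 1`, hence
`(k₁ + k₂ + 6c)² = 8(k₁² + k₂²)`. -/
theorem stmt_6 {Ω : Type*} [MeasurableSpace Ω] (μ : Measure Ω)
    [IsProbabilityMeasure μ] (σ Z₁ Z₂ : Ω → ℝ)
    (hσmeas : Measurable σ) (hZ₁meas : Measurable Z₁) (hZ₂meas : Measurable Z₂)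
    (hindep : iIndepFun ![σ, Z₁, Z₂] μ)
    (hZ₁law : μ.map Z₁ = gaussianReal 0 1)
    (hZ₂law : μ.map Z₂ = gaussianReal 0 1)
    (hσ2 : ∫ ω, σ ω ^ 2 ∂μ = 1)
    (hσ4 : Integrable (fun ω => σ ω ^ 4) μ)
    (k₁ k₂ c : ℝ)
    (hk₁ : k₁ = (∫ ω, (σ ω * Z₁ ω) ^ 4 ∂μ) - 3)
    (hk₂ : k₂ = (∫ ω, (σ ω * Z₂ ω) ^ 4 ∂μ) - 3)
    (hc : c = (∫ ω, (σ ω * Z₁ ω) ^ 2 * (σ ω * Z₂ ω) ^ 2 ∂μ) - 1) :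
    k₁ = 3 * c ∧ k₂ = 3 * c ∧ c = (∫ ω, σ ω ^ 4 ∂μ) - 1 ∧
      (k₁ + k₂ + 6 * c) ^ 2 = 8 * (k₁ ^ 2 + k₂ ^ 2) := by
  have hmeas : ∀ i, Measurable (![σ, Z₁, Z₂] i) := by
    intro i; fin_cases i <;> simpa using ‹_›
  -- fourth moment of Z₁ and Z₂
  have hZ4 : ∀ (Z : Ω → ℝ), Measurable Z → μ.map Z = gaussianReal 0 1 →
      ∫ ω, Z ω ^ 4 ∂μ = 3 := by
    intro Z hZm hZl
    rw [← aux_gauss4, ← hZl, integral_map hZm.aemeasurable]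
    exact (measurable_id.pow_const 4).aestronglyMeasurable
  have hZ2 : ∀ (Z : Ω → ℝ), Measurable Z → μ.map Z = gaussianReal 0 1 →
      ∫ ω, Z ω ^ 2 ∂μ = 1 := by
    intro Z hZm hZl
    rw [← aux_gauss2, ← hZl, integral_map hZm.aemeasurable]
    exact (measurable_id.pow_const 2).aestronglyMeasurable
  -- abbreviation
  set S : ℝ := ∫ ω, σ ω ^ 4 ∂μ with hS
  -- σ independent of Z₁, Z₂
  have h01 : IndepFun σ Z₁ μ := by
    have := hindep.indepFun (i := 0) (j := 1) (show (0:Fin 3) ≠ 1 by decide)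
    simpa using this
  have h02 : IndepFun σ Z₂ μ := by
    have := hindep.indepFun (i := 0) (j := 2) (show (0:Fin 3) ≠ 2 by decide)
    simpa using this
  -- E[(σ Z)^4] = S * 3 for Z = Z₁, Z₂
  have hfourth : ∀ (Z : Ω → ℝ), Measurable Z → μ.map Z = gaussianReal 0 1 →
      IndepFun σ Z μ → ∫ ω, (σ ω * Z ω) ^ 4 ∂μ = 3 * S := by
    intro Z hZm hZl hind
    have hcomp : IndepFun (fun ω => σ ω ^ 4) (fun ω => Z ω ^ 4) μ :=
      hind.comp (measurable_id.pow_const 4) (measurable_id.pow_const 4)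
    calc ∫ ω, (σ ω * Z ω) ^ 4 ∂μ = ∫ ω, σ ω ^ 4 * Z ω ^ 4 ∂μ := by
          simp_rw [mul_pow]
      _ = (∫ ω, σ ω ^ 4 ∂μ) * ∫ ω, Z ω ^ 4 ∂μ :=
          hcomp.integral_fun_mul_eq_mul_integral (hσmeas.pow_const 4).aestronglyMeasurable
            (hZm.pow_const 4).aestronglyMeasurable
      _ = 3 * S := by rw [hZ4 Z hZm hZl, hS]; ring
  -- mixed moment
  have hmix : ∫ ω, (σ ω * Z₁ ω) ^ 2 * (σ ω * Z₂ ω) ^ 2 ∂μ = S := by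
    have hpair : IndepFun (fun ω => (Z₁ ω, Z₂ ω)) σ μ := by
      have := hindep.indepFun_prodMk hmeas 1 2 0 (by decide) (by decide)
      simpa using this
    have hcomp : IndepFun (fun ω => Z₁ ω ^ 2 * Z₂ ω ^ 2) (fun ω => σ ω ^ 4) μ :=
      hpair.comp ((measurable_fst.pow_const 2).mul (measurable_snd.pow_const 2))
        (measurable_id.pow_const 4)
    have h12 : IndepFun Z₁ Z₂ μ := by
      have := hindep.indepFun (i := 1) (j := 2) (show (1:Fin 3) ≠ 2 by decide)
      simpa using this
    have h12sq : IndepFun (fun ω => Z₁ ω ^ 2) (fun ω => Z₂ ω ^ 2) μ :=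
      h12.comp (measurable_id.pow_const 2) (measurable_id.pow_const 2)
    calc ∫ ω, (σ ω * Z₁ ω) ^ 2 * (σ ω * Z₂ ω) ^ 2 ∂μ
        = ∫ ω, (Z₁ ω ^ 2 * Z₂ ω ^ 2) * σ ω ^ 4 ∂μ := by
          refine integral_congr_ae (Filter.Eventually.of_forall fun ω => ?_); ring
      _ = (∫ ω, Z₁ ω ^ 2 * Z₂ ω ^ 2 ∂μ) * ∫ ω, σ ω ^ 4 ∂μ :=
          hcomp.integral_fun_mul_eq_mul_integral
            ((hZ₁meas.pow_const 2).mul (hZ₂meas.pow_const 2)).aestronglyMeasurable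
            (hσmeas.pow_const 4).aestronglyMeasurable
      _ = ((∫ ω, Z₁ ω ^ 2 ∂μ) * ∫ ω, Z₂ ω ^ 2 ∂μ) * S := by
          rw [h12sq.integral_fun_mul_eq_mul_integral (hZ₁meas.pow_const 2).aestronglyMeasurable
            (hZ₂meas.pow_const 2).aestronglyMeasurable, hS]
      _ = S := by rw [hZ2 Z₁ hZ₁meas hZ₁law, hZ2 Z₂ hZ₂meas hZ₂law]; ring
  have hc' : c = S - 1 := by rw [hc, hmix]
  have hk₁' : k₁ = 3 * c := by
    rw [hk₁, hfourth Z₁ hZ₁meas hZ₁law h01, hc']; ring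
  have hk₂' : k₂ = 3 * c := by
    rw [hk₂, hfourth Z₂ hZ₂meas hZ₂law h02, hc']; ring
  refine ⟨hk₁', hk₂', hc', ?_⟩
  rw [hk₁', hk₂']; ring
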